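/- Let G be a complete multipartite graph and H any finite simple graph. Then π(H) + (π(G) − 1)·|V(H)| ≤ π(G ∘ H). -/

import Mathlib

/-- A list is a repetition if it is of the form `w ++ w` for a nonempty `w`. -/
def IsRepetition {α : Type*} (l : List α) : Prop := ∃ w : List α, w ≠ [] ∧ l = w ++ w

/-- A list is non-repetitive if no block of consecutive elements is a repetition. -/
def NonRepetitive {α : Type*} (l : List α) : Prop :=
  ∀ t : List α, t <:+: l → ¬ IsRepetition t

/-- A vertex colouring is non-repetitive if the colour sequence of every path
is not a repetition. -/
def NonRepColoring {V β : Type*} (G : SimpleGraph V) (φ : V → β) : Prop :=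
  ∀ ⦃u v : V⦄ (p : G.Walk u v), p.IsPath → ¬ IsRepetition (p.support.map φ)

/-- The Thue chromatic number: minimum number of colours of a non-repetitive colouring. -/
noncomputable def thueNumber {V : Type*} [Fintype V] (G : SimpleGraph V) : ℕ :=
  sInf {k | ∃ φ : V → Fin k, NonRepColoring G φ}

/-- The Thue choice number: least `k` such that from any lists of size at least `k`
one can choose a non-repetitive colouring. -/
noncomputable def thueChoiceNumber {V : Type*} [Fintype V] (G : SimpleGraph V) : ℕ :=
  sInf {k | ∀ L : V → Finset ℕ, (∀ v, k ≤ (L v).card) →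
    ∃ φ : V → ℕ, (∀ v, φ v ∈ L v) ∧ NonRepColoring G φ}

/-- The independence number of a graph. -/
noncomputable def indepNum {V : Type*} [Fintype V] (G : SimpleGraph V) : ℕ :=
  sSup {n | ∃ s : Finset V, (∀ a ∈ s, ∀ b ∈ s, ¬ G.Adj a b) ∧ s.card = n}

/-- The lexicographic product of two simple graphs. -/
def lexProd {V W : Type*} (G : SimpleGraph V) (H : SimpleGraph W) : SimpleGraph (V × W) where
  Adj x y := G.Adj x.1 y.1 ∨ (x.1 = y.1 ∧ H.Adj x.2 y.2)
  symm := by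
    refine ⟨?_⟩
    rintro x y (h | ⟨h1, h2⟩)
    · exact Or.inl h.symm
    · exact Or.inr ⟨h1.symm, h2.symm⟩
  loopless := by
    refine ⟨?_⟩
    rintro x (h | ⟨h1, h2⟩)
    · exact G.loopless.irrefl _ h
    · exact H.loopless.irrefl _ h2

section Aux

open Finset

lemma isRep_map {α β : Type*} (f : α → β) {l : List α} (h : IsRepetition l) :
    IsRepetition (l.map f) := by
  obtain ⟨w, hw, rfl⟩ := h
  exact ⟨w.map f, by simpa using hw, by simp⟩

lemma nonRepColoring_of_injective {V β : Type*} (G : SimpleGraph V) {φ : V → β}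
    (hφ : Function.Injective φ) : NonRepColoring G φ := by
  intro u v p hp hrep
  obtain ⟨w, hw, hl⟩ := hrep
  have hnd : (p.support.map φ).Nodup := hp.support_nodup.map hφ
  rw [hl] at hnd
  obtain ⟨a, ha⟩ := List.exists_mem_of_ne_nil w hw
  exact (List.disjoint_of_nodup_append hnd) ha ha

lemma exists_nonrep_coloring {V : Type*} [Fintype V] (G : SimpleGraph V) :
    ∃ φ : V → Fin (thueNumber G), NonRepColoring G φ :=
  Nat.sInf_mem (⟨Fintype.card V, (Fintype.equivFin V),
    nonRepColoring_of_injective G (Fintype.equivFin V).injective⟩ :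
      Set.Nonempty {k | ∃ φ : V → Fin k, NonRepColoring G φ})

lemma thueNumber_le_card_image {V β : Type*} [Fintype V] [DecidableEq β] (G : SimpleGraph V)
    {φ : V → β} (h : NonRepColoring G φ) :
    thueNumber G ≤ (Finset.image φ Finset.univ).card := by
  classical
  set s := Finset.image φ Finset.univ with hs
  have hmem : ∀ v, φ v ∈ s := fun v => Finset.mem_image_of_mem φ (Finset.mem_univ v)
  let e : s ≃ Fin s.card := s.equivFin
  let φ₂ : V → Fin s.card := fun v => e ⟨φ v, hmem v⟩
  have h2 : NonRepColoring G φ₂ := by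
    intro u v p hp hrep
    apply h p hp
    have hfac : p.support.map φ = (p.support.map φ₂).map (fun x => (e.symm x : β)) := by
      rw [List.map_map]
      apply List.map_congr_left
      intro a _
      simp [φ₂]
    rw [hfac]
    exact isRep_map _ hrep
  exact Nat.sInf_le ⟨φ₂, h2⟩

end Aux

/-- Lower bound for the Thue chromatic number of the lexicographic product of
a complete multipartite graph with an arbitrary graph. -/
theorem thueNumber_lexProd_completeMultipartite_lower {ι : Type*} [Fintype ι]
    (V : ι → Type*) [∀ i, Fintype (V i)] [Nonempty (Σ i, V i)]
    {W : Type*} [Fintype W] (H : SimpleGraph W) :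
    thueNumber H + (thueNumber (SimpleGraph.completeMultipartiteGraph V) - 1) * Fintype.card W ≤
      thueNumber (lexProd (SimpleGraph.completeMultipartiteGraph V) H) := by
  classical
  set G := SimpleGraph.completeMultipartiteGraph V with hG
  set L := lexProd G H with hL
  -- trivial case: W empty
  rcases isEmpty_or_nonempty W with hW | hW
  · have hcW : Fintype.card W = 0 := Fintype.card_eq_zero
    have hH : thueNumber H ≤ 0 := Nat.sInf_le
      ⟨fun w => (hW.false w).elim, by intro u v p; exact (hW.false u).elim⟩
    rw [hcW, Nat.mul_zero, Nat.add_zero]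
    omega
  -- main case
  set k := thueNumber L with hk
  obtain ⟨c, hc⟩ := exists_nonrep_coloring L
  have hGadj : ∀ x y : Σ i, V i, G.Adj x y ↔ x.1 ≠ y.1 := fun x y => Iff.rfl
  -- colours of product-vertices in different parts are distinct
  have hne : ∀ x y : (Σ i, V i) × W, x.1.1 ≠ y.1.1 → c x ≠ c y := by
    intro x y hxy hcc
    have hadj : L.Adj x y := Or.inl hxy
    have hxny : x ≠ y := fun h => hxy (by rw [h])
    set p : L.Walk x y := SimpleGraph.Walk.cons hadj SimpleGraph.Walk.nil with hp'
    have hp : p.IsPath := by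
      simp [hp', SimpleGraph.Walk.isPath_def, hxny]
    exact hc p hp ⟨[c x], by simp, by simp [hp', hcc]⟩
  -- a part is deficient if two distinct product-vertices over it share a colour
  set Def : ι → Prop := fun i => ∃ x y : (Σ i', V i') × W,
      x ≠ y ∧ x.1.1 = i ∧ y.1.1 = i ∧ c x = c y with hDef
  have hdef : ∀ i j, Def i → Def j → i = j := by
    rintro i j ⟨x, y, hxy, hxi, hyi, hcxy⟩ ⟨z, t, hzt, hzj, htj, hczt⟩
    by_contra hij
    have a1 : L.Adj x z := Or.inl ((hGadj x.1 z.1).mpr (by rw [hxi, hzj]; exact hij))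
    have a2 : L.Adj z y := Or.inl ((hGadj z.1 y.1).mpr (by rw [hzj, hyi]; exact fun h => hij h.symm))
    have a3 : L.Adj y t := Or.inl ((hGadj y.1 t.1).mpr (by rw [hyi, htj]; exact hij))
    set p : L.Walk x t := SimpleGraph.Walk.cons a1 (SimpleGraph.Walk.cons a2
      (SimpleGraph.Walk.cons a3 SimpleGraph.Walk.nil)) with hp'
    have nxz : x ≠ z := fun h => hij (by rw [← hxi, ← hzj, h])
    have nxt : x ≠ t := fun h => hij (by rw [← hxi, ← htj, h])
    have nzy : z ≠ y := fun h => hij (by rw [← hzj, ← hyi, h])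
    have nyt : y ≠ t := fun h => hij (by rw [← hyi, ← htj, h])
    have hp : p.IsPath := by
      simp [hp', SimpleGraph.Walk.isPath_def, nxz, hxy, nxt, nzy, hzt, nyt]
    exact hc p hp ⟨[c x, c z], by simp, by simp [hp', hcxy, hczt]⟩
  obtain ⟨v₀⟩ := ‹Nonempty (Σ i, V i)›
  set i₀ : ι := if h : ∃ i, Def i then h.choose else v₀.1 with hi₀
  have hnodef : ∀ i, i ≠ i₀ → ¬ Def i := by
    intro i hi hd
    by_cases h : ∃ i, Def i
    · exact hi (by rw [hi₀, dif_pos h]; exact hdef i h.choose hd h.choose_spec)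
    · exact h ⟨i, hd⟩
  have hV₀ : Nonempty (V i₀) := by
    by_cases h : ∃ i, Def i
    · obtain ⟨x, y, _, hxi, _, _⟩ := h.choose_spec
      have he : i₀ = h.choose := by rw [hi₀, dif_pos h]
      exact he ▸ hxi ▸ ⟨x.1.2⟩
    · have he : i₀ = v₀.1 := by rw [hi₀, dif_neg h]
      exact he ▸ ⟨v₀.2⟩
  -- full injectivity outside the part i₀
  have hinj : ∀ x y : (Σ i, V i) × W, x.1.1 ≠ i₀ → y.1.1 ≠ i₀ → c x = c y → x = y := by
    intro x y hx hy hcc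
    by_contra hxy
    by_cases h : x.1.1 = y.1.1
    · exact hnodef x.1.1 hx ⟨x, y, hxy, rfl, h.symm, hcc⟩
    · exact hne x y h hcc
  -- colour sets of copies
  set Su : (Σ i, V i) → Finset (Fin k) :=
    fun u => Finset.image (fun w => c (u, w)) Finset.univ with hSu
  have hSne : ∀ u, (Su u).Nonempty := fun u =>
    Finset.image_nonempty.mpr Finset.univ_nonempty
  have hSdisj : ∀ u x : Σ i, V i, u ≠ x → u.1 ≠ i₀ → x.1 ≠ i₀ → Disjoint (Su u) (Su x) := by
    intro u x hux hu hx
    rw [Finset.disjoint_left]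
    intro a ha hb
    simp only [hSu, Finset.mem_image, Finset.mem_univ, true_and] at ha hb
    obtain ⟨w1, hw1⟩ := ha
    obtain ⟨w2, hw2⟩ := hb
    have := hinj (u, w1) (x, w2) hu hx (hw1.trans hw2.symm)
    exact hux (congrArg Prod.fst this)
  -- the collapsed colouring of G
  set ψ : (Σ i, V i) → Option (Finset (Fin k)) :=
    fun u => if u.1 = i₀ then none else some (Su u) with hψdef
  have hψ : NonRepColoring G ψ := by
    intro u v p hp hrep
    obtain ⟨w, hw0, hlw⟩ := hrep
    set l := p.support with hl'
    have hnd : l.Nodup := hp.support_nodup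
    have hch : l.IsChain G.Adj := p.isChain_adj_support
    have hn : 0 < w.length := List.length_pos_iff.mpr hw0
    have hlen : l.length = w.length + w.length := by
      have := congrArg List.length hlw
      simpa using this
    have hpair : ∀ i j, ∀ (hi : i < w.length) (hj : j = i + w.length),
        ψ (l[i]'(by omega)) = ψ (l[j]'(by omega)) := by
      intro i j hi hj
      subst hj
      have h1 : (l.map ψ)[i]'(by simp; omega) = w[i]'hi := by
        refine (List.getElem_of_eq hlw _).trans ?_
        exact List.getElem_append_left hi
      have h2 : (l.map ψ)[i + w.length]'(by simp; omega) = w[i]'hi := by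
        refine (List.getElem_of_eq hlw _).trans ?_
        rw [List.getElem_append_right (by omega)]
        simp
      rw [List.getElem_map] at h1 h2
      rw [h1, h2]
    have hnone : ∀ i, (hi : i < w.length) → ψ (l[i]'(by omega)) = none := by
      intro i hi
      by_contra hsome
      obtain ⟨S, hS⟩ := Option.ne_none_iff_exists'.mp hsome
      have heq := (hpair i (i + w.length) hi rfl).symm.trans hS
      have hni : (l[i]'(by omega)).1 ≠ i₀ := by
        intro h; simp [hψdef, h] at hS
      have hni' : (l[i + w.length]'(by omega)).1 ≠ i₀ := by
        intro h; simp [hψdef, h] at heq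
      have hSv : Su (l[i]'(by omega)) = S := by
        simpa [hψdef, hni] using hS
      have hSv' : Su (l[i + w.length]'(by omega)) = S := by
        simpa [hψdef, hni'] using heq
      have hvne : (l[i]'(by omega)) ≠ (l[i + w.length]'(by omega)) := by
        intro h
        have := (hnd.getElem_inj_iff).mp h
        omega
      have hdisj := hSdisj _ _ hvne hni hni'
      rw [hSv, hSv'] at hdisj
      have hS0 : S = ⊥ := disjoint_self.mp hdisj
      exact (hSne (l[i]'(by omega))).ne_empty (by rw [hSv, hS0]; rfl)
    have h0 : ψ (l[0]'(by omega)) = none := hnone 0 hn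
    have h1 : ψ (l[1]'(by omega)) = none := by
      rcases Nat.lt_or_ge 1 w.length with h | h
      · exact hnone 1 h
      · have hw1 : 1 = 0 + w.length := by omega
        exact (hpair 0 1 hn hw1).symm.trans (hnone 0 hn)
    have hadj01 : G.Adj (l[0]'(by omega)) (l[1]'(by omega)) := by
      have := List.isChain_iff_getElem.mp hch 0 (by omega)
      simpa using this
    have e0 : (l[0]'(by omega)).1 = i₀ := by
      by_contra h; simp [hψdef, h] at h0
    have e1 : (l[1]'(by omega)).1 = i₀ := by
      by_contra h; simp [hψdef, h] at h1
    exact ((hGadj _ _).mp hadj01) (e0.trans e1.symm)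
  -- bound on the Thue number of G
  set N := (Finset.univ.filter (fun u : Σ i, V i => u.1 ≠ i₀)).card with hN
  have hπG : thueNumber G ≤ 1 + N := by
    refine (thueNumber_le_card_image G hψ).trans ?_
    have hsub : Finset.image ψ Finset.univ ⊆
        insert none ((Finset.univ.filter (fun u : Σ i, V i => u.1 ≠ i₀)).image
          (fun u => some (Su u))) := by
      intro a ha
      simp only [Finset.mem_image, Finset.mem_univ, true_and] at ha
      obtain ⟨u, rfl⟩ := ha
      by_cases h : u.1 = i₀
      · simp [hψdef, h]
      · simp only [hψdef, if_neg h, Finset.mem_insert, Finset.mem_image, Finset.mem_filter,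
          Finset.mem_univ, true_and]
        exact Or.inr ⟨u, h, rfl⟩
    refine (Finset.card_le_card hsub).trans ?_
    refine (Finset.card_insert_le _ _).trans ?_
    have := Finset.card_image_le (s := (Finset.univ.filter (fun u : Σ i, V i => u.1 ≠ i₀)))
      (f := fun u => some (Su u))
    omega
  -- the colour counting
  set PA : Finset ((Σ i, V i) × W) := Finset.univ.filter (fun x => x.1.1 ≠ i₀) with hPA
  set PB : Finset ((Σ i, V i) × W) := Finset.univ.filter (fun x => x.1.1 = i₀) with hPB
  set A := PA.image c with hA
  set B := PB.image c with hB
  have hAB : Disjoint A B := by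
    rw [Finset.disjoint_left]
    intro a ha hb
    rw [hA, Finset.mem_image] at ha
    rw [hB, Finset.mem_image] at hb
    obtain ⟨x, hx, hxa⟩ := ha
    obtain ⟨y, hy, hya⟩ := hb
    rw [hPA, Finset.mem_filter] at hx
    rw [hPB, Finset.mem_filter] at hy
    exact hne x y (by rw [hy.2]; exact hx.2) (hxa.trans hya.symm)
  have hcardA : A.card = N * Fintype.card W := by
    rw [hA, Finset.card_image_of_injOn]
    · have hPAeq : PA = (Finset.univ.filter (fun u : Σ i, V i => u.1 ≠ i₀)) ×ˢ
          (Finset.univ : Finset W) := by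
        ext x
        simp [hPA]
      rw [hPAeq, Finset.card_product, hN]
      simp
    · intro x hx y hy hcc
      simp only [hPA, Finset.coe_filter, Finset.mem_univ, true_and, Set.mem_setOf_eq] at hx hy
      exact hinj x y hx hy hcc
  -- the copy over i₀ gives at least thueNumber H colours
  obtain ⟨a₀⟩ := hV₀
  set u₀ : Σ i, V i := ⟨i₀, a₀⟩ with hu₀
  have hφ₀ : NonRepColoring H (fun w => c (u₀, w)) := by
    intro u v p hp hrep
    set f : H →g L := ⟨fun w => (u₀, w), fun h => Or.inr ⟨rfl, h⟩⟩ with hf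
    have hfinj : Function.Injective f := fun a b h => congrArg Prod.snd h
    refine hc (p.map f) (p.map_isPath_of_injective hfinj hp) ?_
    have : (p.map f).support.map c = p.support.map (fun w => c (u₀, w)) := by
      rw [SimpleGraph.Walk.support_map, List.map_map]
      rfl
    rw [this]
    exact hrep
  have hπH : thueNumber H ≤ B.card := by
    refine (thueNumber_le_card_image H hφ₀).trans (Finset.card_le_card ?_)
    intro a ha
    rw [Finset.mem_image] at ha
    obtain ⟨w, _, hw⟩ := ha
    rw [hB, Finset.mem_image]
    exact ⟨(u₀, w), by rw [hPB]; simp [hu₀], hw⟩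
  have hkbound : A.card + B.card ≤ k := by
    rw [← Finset.card_union_of_disjoint hAB]
    calc (A ∪ B).card ≤ (Finset.univ : Finset (Fin k)).card :=
          Finset.card_le_card (Finset.subset_univ _)
      _ = k := by simp
  have h1 : thueNumber G - 1 ≤ N := by omega
  calc thueNumber H + (thueNumber G - 1) * Fintype.card W
      ≤ B.card + N * Fintype.card W :=
        Nat.add_le_add hπH (Nat.mul_le_mul_right _ h1)
    _ ≤ k := by omega
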